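/- Let N be a positive integer and a > 0 real. Let z_1, …, z_N be the zeros of the generalized Laguerre polynomial L_N^{(a−1)} and define the power sums m_p := z_1^p + ⋯ + z_N^p for integers p ≥ 0. Then m_0 = N and for every integer k ≥ 0 the recurrence m_{k+1} = Σ_{s=0}^{k} m_s m_{k−s} − (k + 1 − a)·m_k holds. -/

import Mathlib

open Polynomial Finset

/-- The generalized Laguerre polynomial `L_N^{(a-1)}(x) =
∑_{k=0}^N (-1)^k (Γ(N+a) / (Γ(k+a) (N-k)! k!)) x^k`. -/
noncomputable def laguerre (N : ℕ) (a : ℝ) : Polynomial ℝ :=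
  ∑ k ∈ Finset.range (N + 1),
    Polynomial.C ((-1 : ℝ) ^ k *
      (Real.Gamma ((N : ℝ) + a) /
        (Real.Gamma ((k : ℝ) + a) * ((N - k).factorial : ℝ) * (k.factorial : ℝ)))) *
      Polynomial.X ^ k

noncomputable def lagC (N : ℕ) (a : ℝ) (k : ℕ) : ℝ :=
  (-1 : ℝ) ^ k * (Real.Gamma ((N : ℝ) + a) /
    (Real.Gamma ((k : ℝ) + a) * ((N - k).factorial : ℝ) * (k.factorial : ℝ)))

lemma laguerre_coeff (N : ℕ) (a : ℝ) (n : ℕ) :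
    (laguerre N a).coeff n = if n ≤ N then lagC N a n else 0 := by
  unfold laguerre lagC
  rw [finset_sum_coeff]
  simp only [coeff_C_mul, coeff_X_pow, mul_ite, mul_one, mul_zero]
  rw [Finset.sum_ite_eq (Finset.range (N+1)) n]
  simp [Nat.lt_succ_iff]

lemma lagC_rec (N : ℕ) (a : ℝ) (ha : 0 < a) {n : ℕ} (hn : n < N) :
    ((n : ℝ) + 1) * ((n : ℝ) + a) * lagC N a (n + 1) = ((n : ℝ) - N) * lagC N a n := by
  have hgpos : 0 < Real.Gamma ((n : ℝ) + a) := Real.Gamma_pos_of_pos (by positivity)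
  have hgrec : Real.Gamma ((↑(n+1) : ℝ) + a) = ((n : ℝ) + a) * Real.Gamma ((n : ℝ) + a) := by
    push_cast
    rw [show (n : ℝ) + 1 + a = ((n:ℝ) + a) + 1 by ring, Real.Gamma_add_one (by positivity)]
  have hfac : ((N - n).factorial : ℝ) = ((N : ℝ) - n) * ((N - (n+1)).factorial : ℝ) := by
    have h1 : N - n = (N - (n+1)) + 1 := by omega
    rw [h1, Nat.factorial_succ]
    push_cast [Nat.cast_sub (by omega : n + 1 ≤ N)]
    ring
  have hfac2 : (((n+1)).factorial : ℝ) = ((n:ℝ)+1) * (n.factorial : ℝ) := by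
    rw [Nat.factorial_succ]; push_cast; ring
  unfold lagC
  rw [hgrec, hfac, hfac2, pow_succ]
  have h1 : Real.Gamma ((n : ℝ) + a) ≠ 0 := ne_of_gt hgpos
  have h2 : ((N - (n+1)).factorial : ℝ) ≠ 0 := by positivity
  have h3 : (n.factorial : ℝ) ≠ 0 := by positivity
  have h4 : ((n:ℝ) + a) ≠ 0 := by positivity
  have h5 : ((n:ℝ) + 1) ≠ 0 := by positivity
  have h6 : ((N:ℝ) - n) ≠ 0 := by
    have : (n:ℝ) < N := by exact_mod_cast hn
    linarith
  field_simp
  ring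

lemma coeff_rec (N : ℕ) (a : ℝ) (ha : 0 < a) (n : ℕ) :
    ((n : ℝ) + 1) * ((n : ℝ) + a) * (laguerre N a).coeff (n + 1)
      = ((n : ℝ) - N) * (laguerre N a).coeff n := by
  rw [laguerre_coeff, laguerre_coeff]
  rcases lt_trichotomy n N with h | h | h
  · rw [if_pos (by omega), if_pos (by omega)]
    exact lagC_rec N a ha h
  · subst h
    rw [if_neg (by omega), if_pos le_rfl]
    simp
  · rw [if_neg (by omega), if_neg (by omega)]
    simp

lemma laguerre_ode (N : ℕ) (a : ℝ) (ha : 0 < a) :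
    X * derivative (derivative (laguerre N a)) + (C a - X) * derivative (laguerre N a)
      + C (N : ℝ) * laguerre N a = 0 := by
  set L := laguerre N a
  ext q
  rw [sub_mul]
  simp only [coeff_add, coeff_sub, coeff_C_mul, coeff_zero]
  rcases q with _ | n
  · simp only [mul_coeff_zero, coeff_X_zero, zero_mul, coeff_derivative]
    have h := coeff_rec N a ha 0
    push_cast at h ⊢
    nlinarith [h]
  · rw [coeff_X_mul, coeff_X_mul]
    simp only [coeff_derivative]
    have h := coeff_rec N a ha (n + 1)
    push_cast at h ⊢
    nlinarith [h]

lemma laguerre_natDegree_le (N : ℕ) (a : ℝ) : (laguerre N a).natDegree ≤ N := by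
  rw [Polynomial.natDegree_le_iff_coeff_eq_zero]
  intro q hq
  rw [laguerre_coeff, if_neg (by omega)]

lemma laguerre_leading_ne (N : ℕ) (a : ℝ) (ha : 0 < a) : (laguerre N a).coeff N ≠ 0 := by
  rw [laguerre_coeff, if_pos le_rfl]
  unfold lagC
  have hg : 0 < Real.Gamma ((N : ℝ) + a) := Real.Gamma_pos_of_pos (by positivity)
  simp only [Nat.sub_self, Nat.factorial_zero, Nat.cast_one]
  have : Real.Gamma ((N : ℝ) + a) / (Real.Gamma ((N : ℝ) + a) * 1 * (N.factorial : ℝ)) ≠ 0 := by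
    positivity
  intro hc
  rcases mul_eq_zero.1 hc with h | h
  · exact (pow_ne_zero N (by norm_num : (-1:ℝ) ≠ 0)) h
  · exact this h

lemma deriv_prod_lin {ι : Type*} [DecidableEq ι] (z : ι → ℝ) (s : Finset ι) :
    derivative (∏ i ∈ s, (X - C (z i))) = ∑ i ∈ s, ∏ l ∈ s.erase i, (X - C (z l)) := by
  induction s using Finset.induction with
  | empty => simp
  | insert b s ha ih =>
    rw [Finset.prod_insert ha, derivative_mul, derivative_X_sub_C, ih, Finset.sum_insert ha,
      Finset.erase_insert ha, one_mul, Finset.mul_sum]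
    congr 1
    refine Finset.sum_congr rfl fun i hi => ?_
    have hbi : b ≠ i := fun h => ha (h ▸ hi)
    rw [Finset.erase_insert_of_ne hbi,
      Finset.prod_insert (fun h => ha (Finset.mem_of_mem_erase h))]

lemma eval_d1 {N : ℕ} (z : Fin N → ℝ) (j : Fin N) :
    eval (z j) (derivative (∏ i, (X - C (z i)))) = ∏ i ∈ Finset.univ.erase j, (z j - z i) := by
  rw [deriv_prod_lin, eval_finset_sum]
  rw [Finset.sum_eq_single j]
  · simp [eval_prod]
  · intro i _ hij
    rw [eval_prod]
    exact Finset.prod_eq_zero (Finset.mem_erase.2 ⟨Ne.symm hij, Finset.mem_univ j⟩) (by simp)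
  · simp

lemma eval_d2 {N : ℕ} (z : Fin N → ℝ) (j : Fin N) :
    eval (z j) (derivative (derivative (∏ i, (X - C (z i)))))
      = 2 * ∑ i ∈ Finset.univ.erase j, ∏ l ∈ (Finset.univ.erase j).erase i, (z j - z l) := by
  rw [deriv_prod_lin, derivative_sum]
  simp only [deriv_prod_lin]
  rw [eval_finset_sum]
  have hsplit := Finset.add_sum_erase Finset.univ
    (fun i => eval (z j) (∑ l ∈ (Finset.univ.erase i), ∏ m ∈ ((Finset.univ.erase i)).erase l, (X - C (z m))))
    (Finset.mem_univ j)
  rw [← hsplit]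
  have h1 : eval (z j) (∑ l ∈ Finset.univ.erase j, ∏ m ∈ (Finset.univ.erase j).erase l, (X - C (z m)))
      = ∑ l ∈ Finset.univ.erase j, ∏ m ∈ (Finset.univ.erase j).erase l, (z j - z m) := by
    rw [eval_finset_sum]; simp [eval_prod]
  have h2 : ∀ i ∈ Finset.univ.erase j,
      eval (z j) (∑ l ∈ Finset.univ.erase i, ∏ m ∈ (Finset.univ.erase i).erase l, (X - C (z m)))
        = ∏ m ∈ (Finset.univ.erase j).erase i, (z j - z m) := by
    intro i hi
    have hij : i ≠ j := (Finset.mem_erase.1 hi).1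
    rw [eval_finset_sum, Finset.sum_eq_single j]
    · rw [eval_prod, Finset.erase_right_comm]; simp
    · intro l hl hlj
      rw [eval_prod]
      refine Finset.prod_eq_zero (Finset.mem_erase.2 ⟨Ne.symm hlj, Finset.mem_erase.2 ⟨Ne.symm hij, Finset.mem_univ j⟩⟩) (by simp)
    · intro h
      exact absurd (Finset.mem_erase.2 ⟨Ne.symm hij, Finset.mem_univ j⟩) h
  rw [h1, Finset.sum_congr rfl h2]
  ring

/-- The power sums `m_p` of the zeros of the generalized Laguerre polynomial
`L_N^{(a-1)}` satisfy `m_0 = N` and the recurrence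
`m_{k+1} = ∑_{s=0}^k m_s m_{k-s} - (k + 1 - a) m_k`. -/
theorem stmt_12 (N : ℕ) (hN : 0 < N) (a : ℝ) (ha : 0 < a)
    (z : Fin N → ℝ) (hmono : StrictMono z)
    (hzero : ∀ j, (laguerre N a).eval (z j) = 0)
    (m : ℕ → ℝ) (hm : ∀ p, m p = ∑ j, z j ^ p) :
    m 0 = N ∧
      ∀ k : ℕ, m (k + 1) = (∑ s ∈ range (k + 1), m s * m (k - s))
        - ((k : ℝ) + 1 - a) * m k := by
  have hinj : Function.Injective z := hmono.injective
  constructor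
  · rw [hm 0]; simp
  intro k
  -- factorization of the Laguerre polynomial over its roots
  set L := laguerre N a with hLdef
  set Q : Polynomial ℝ := ∏ j, (X - C (z j)) with hQdef
  set lc : ℝ := L.coeff N with hlcdef
  have hlcne : lc ≠ 0 := laguerre_leading_ne N a ha
  have hQmonic : Q.Monic := monic_prod_of_monic _ _ fun j _ => monic_X_sub_C (z j)
  have hQdeg : Q.natDegree = N := by
    rw [hQdef, natDegree_prod_of_monic _ _ fun j _ => monic_X_sub_C (z j)]
    simp
  have hQcoeff : Q.coeff N = 1 := by
    have := hQmonic.coeff_natDegree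
    rwa [hQdeg] at this
  have hQeval : ∀ j, eval (z j) Q = 0 := by
    intro j
    rw [hQdef, eval_prod]
    exact Finset.prod_eq_zero (Finset.mem_univ j) (by simp)
  have hfact : L = C lc * Q := by
    set p : Polynomial ℝ := L - C lc * Q with hpdef
    have hpcoeff : p.coeff N = 0 := by
      rw [hpdef]
      simp [coeff_sub, coeff_C_mul, hQcoeff, hlcdef]
    have hpdeg : p.natDegree ≤ N := by
      refine le_trans (natDegree_sub_le _ _) ?_
      refine max_le (laguerre_natDegree_le N a) ?_
      refine le_trans (natDegree_mul_le) ?_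
      simp [hQdeg]
    have hpz : p = 0 := by
      by_cases hp0 : p = 0
      · exact hp0
      have hplt : p.natDegree < N := by
        rcases lt_or_eq_of_le hpdeg with h | h
        · exact h
        · exfalso
          have := Polynomial.leadingCoeff_ne_zero.2 hp0
          rw [Polynomial.leadingCoeff, h] at this
          exact this hpcoeff
      refine Polynomial.eq_zero_of_natDegree_lt_card_of_eval_eq_zero p hinj ?_ ?_
      · intro j
        rw [hpdef]
        simp [hzero j, hQeval j]
      · rwa [Fintype.card_fin]
    exact sub_eq_zero.1 hpz
  -- products over the other roots
  set P : Fin N → ℝ := fun j => ∏ i ∈ Finset.univ.erase j, (z j - z i) with hPdef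
  have hPne : ∀ j, P j ≠ 0 := by
    intro j
    refine Finset.prod_ne_zero_iff.2 fun i hi => ?_
    exact sub_ne_zero.2 fun h => (Finset.mem_erase.1 hi).1 (hinj h).symm
  -- the per-root identity coming from the ODE
  have hroot : ∀ j, 2 * z j * (∑ i, (z j - z i)⁻¹) = z j - a := by
    intro j
    have hode := laguerre_ode N a ha
    rw [← hLdef] at hode
    have hev := congrArg (eval (z j)) hode
    simp only [eval_add, eval_mul, eval_sub, eval_X, eval_C, eval_zero, hzero j,
      mul_zero, add_zero] at hev
    have hd1 : eval (z j) (derivative L) = lc * P j := by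
      rw [hfact, derivative_C_mul, eval_mul, eval_C, hQdef, eval_d1]
    have hSi : ∀ i ∈ Finset.univ.erase j,
        ∏ l ∈ (Finset.univ.erase j).erase i, (z j - z l) = P j * (z j - z i)⁻¹ := by
      intro i hi
      have hne : z j - z i ≠ 0 := sub_ne_zero.2 fun h => (Finset.mem_erase.1 hi).1 (hinj h).symm
      rw [eq_mul_inv_iff_mul_eq₀ hne]
      exact Finset.prod_erase_mul _ _ hi
    have hd2 : eval (z j) (derivative (derivative L))
        = lc * (2 * (P j * ∑ i, (z j - z i)⁻¹)) := by
      rw [hfact, derivative_C_mul, derivative_C_mul, eval_mul, eval_C, hQdef, eval_d2]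
      rw [Finset.sum_congr rfl hSi, ← Finset.mul_sum,
        Finset.sum_erase Finset.univ (by simp)]
    have key : lc * P j * (2 * z j * (∑ i, (z j - z i)⁻¹) - (z j - a)) = 0 := by
      rw [hd1, hd2] at hev
      linear_combination hev
    have h0 := (mul_eq_zero.1 key).resolve_left (mul_ne_zero hlcne (hPne j))
    linarith [h0]
  -- multiply by z j ^ k
  set f : Fin N → Fin N → ℝ := fun j i => z j ^ (k + 1) * (z j - z i)⁻¹ with hfdef
  have hper : ∀ j, 2 * (∑ i, f j i) = z j ^ (k + 1) - a * z j ^ k := by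
    intro j
    have h := hroot j
    rw [hfdef]
    simp only [← Finset.mul_sum]
    ring_nf
    linear_combination (z j ^ k) * h
  have hpair : ∀ j i, f j i + f i j
      = if i = j then 0 else ∑ s ∈ range (k + 1), z j ^ s * z i ^ (k - s) := by
    intro j i
    by_cases h : i = j
    · subst h; simp [hfdef]
    · rw [if_neg h, hfdef]
      have hne : z j - z i ≠ 0 := sub_ne_zero.2 fun hh => h (hinj hh).symm
      have hg : (∑ s ∈ range (k + 1), z j ^ s * z i ^ (k - s)) * (z j - z i)
          = z j ^ (k + 1) - z i ^ (k + 1) := by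
        have := geom_sum₂_mul (z j) (z i) (k + 1)
        simpa using this
      show z j ^ (k + 1) * (z j - z i)⁻¹ + z i ^ (k + 1) * (z i - z j)⁻¹
          = ∑ s ∈ range (k + 1), z j ^ s * z i ^ (k - s)
      have hstep : z j ^ (k + 1) * (z j - z i)⁻¹ + z i ^ (k + 1) * -(z j - z i)⁻¹
          = (z j ^ (k + 1) - z i ^ (k + 1)) * (z j - z i)⁻¹ := by ring
      rw [show z i - z j = -(z j - z i) by ring, inv_neg, hstep, ← hg,
        mul_inv_cancel_right₀ hne]
  -- the three summation identities
  have e1 : ∑ j, (z j ^ (k + 1) - a * z j ^ k) = m (k + 1) - a * m k := by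
    rw [hm, hm, Finset.mul_sum, ← Finset.sum_sub_distrib]
  have e2 : ∑ j, (z j ^ (k + 1) - a * z j ^ k) = ∑ j, ∑ i, (f j i + f i j) := by
    have swap : (∑ j, ∑ i, f j i) = ∑ j, ∑ i, f i j := Finset.sum_comm
    calc ∑ j, (z j ^ (k + 1) - a * z j ^ k) = ∑ j, 2 * ∑ i, f j i :=
          Finset.sum_congr rfl fun j _ => (hper j).symm
      _ = (∑ j, ∑ i, f j i) + ∑ j, ∑ i, f j i := by
          rw [← Finset.mul_sum]; ring
      _ = (∑ j, ∑ i, f j i) + ∑ j, ∑ i, f i j := by rw [swap]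
      _ = ∑ j, ∑ i, (f j i + f i j) := by
          rw [← Finset.sum_add_distrib]
          exact Finset.sum_congr rfl fun j _ => (Finset.sum_add_distrib).symm
  have hA : (∑ j, ∑ i, ∑ s ∈ range (k + 1), z j ^ s * z i ^ (k - s))
      = ∑ s ∈ range (k + 1), m s * m (k - s) := by
    calc ∑ j : Fin N, ∑ i : Fin N, ∑ s ∈ range (k + 1), z j ^ s * z i ^ (k - s)
        = ∑ j : Fin N, ∑ s ∈ range (k + 1), ∑ i : Fin N, z j ^ s * z i ^ (k - s) :=
          Finset.sum_congr rfl fun j _ => Finset.sum_comm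
      _ = ∑ s ∈ range (k + 1), ∑ j : Fin N, ∑ i : Fin N, z j ^ s * z i ^ (k - s) :=
          Finset.sum_comm
      _ = ∑ s ∈ range (k + 1), m s * m (k - s) := by
          refine Finset.sum_congr rfl fun s _ => ?_
          rw [hm, hm, Finset.sum_mul_sum]
  have hB : (∑ j, ∑ i, (if i = j then ∑ s ∈ range (k + 1), z j ^ s * z i ^ (k - s) else 0))
      = ((k : ℝ) + 1) * m k := by
    have hdiag : ∀ j : Fin N,
        (∑ i, (if i = j then ∑ s ∈ range (k + 1), z j ^ s * z i ^ (k - s) else 0))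
          = ((k : ℝ) + 1) * z j ^ k := by
      intro j
      rw [Finset.sum_ite_eq' Finset.univ j
        (fun i => ∑ s ∈ range (k + 1), z j ^ s * z i ^ (k - s))]
      rw [if_pos (Finset.mem_univ j)]
      rw [Finset.sum_congr rfl fun s hs => by
        rw [← pow_add, Nat.add_sub_cancel' (Nat.lt_succ_iff.1 (Finset.mem_range.1 hs))]]
      rw [Finset.sum_const, Finset.card_range, nsmul_eq_mul]
      push_cast; ring
    rw [Finset.sum_congr rfl fun j _ => hdiag j, hm, Finset.mul_sum]
  have e3 : (∑ j, ∑ i, (f j i + f i j))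
      = (∑ s ∈ range (k + 1), m s * m (k - s)) - ((k : ℝ) + 1) * m k := by
    have : ∀ j, (∑ i, (f j i + f i j))
        = (∑ i, ∑ s ∈ range (k + 1), z j ^ s * z i ^ (k - s))
          - ∑ i, (if i = j then ∑ s ∈ range (k + 1), z j ^ s * z i ^ (k - s) else 0) := by
      intro j
      rw [← Finset.sum_sub_distrib]
      refine Finset.sum_congr rfl fun i _ => ?_
      rw [hpair j i]
      by_cases h : i = j <;> simp [h]
    rw [Finset.sum_congr rfl fun j _ => this j, Finset.sum_sub_distrib, hA, hB]
  have hmain : m (k + 1) - a * m k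
      = (∑ s ∈ range (k + 1), m s * m (k - s)) - ((k : ℝ) + 1) * m k := by
    rw [← e1, e2, e3]
  linarith [hmain]
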